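/- arXiv:2004.05927 — 2 statements merged into one kernel-verified Lean document; each statement's English description precedes it below -/
import Mathlib

section
/- Let w : [1,∞) → [1,∞) be increasing with ∫₁^∞ du/w(u) < ∞, and let L₀, L₁ : [0,∞) → [1,∞) be nondecreasing with L₀(t)+L₁(t) = t+2. Then ∫₀^∞ (1{X_u=0}/ (w(L₀(u)) w(L₁(u))²) + 1{X_u=1}/(w(L₁(u)) w(L₀(u))²)) du ≤ 2 ∫₁^∞ du/w(u), where at each time u exactly one indicator is 1 and the corresponding local time increases at unit rate. -/
open MeasureTheory Set intervalIntegral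




lemma keyA (B : Set ℝ) (L : ℝ → ℝ)
    (hLmono : Monotone L) (hL1 : ∀ u : ℝ, 0 < u → 1 ≤ L u)
    (hLvol : ∀ u : ℝ, 0 < u → volume (B ∩ Set.Ioc 0 u) = ENNReal.ofReal (L u - 1))
    (S : Set ℝ) (hS : ∀ x ∈ S, ∀ y : ℝ, 1 ≤ y → y ≤ x → y ∈ S) :
    volume (B ∩ (Set.Ioi 0 ∩ L ⁻¹' S)) ≤ volume (Set.Ioi 1 ∩ S) := by
  set U : Set ℝ := Set.Ioi 0 ∩ L ⁻¹' S with hU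
  have key : ∀ u ∈ U, volume (B ∩ Set.Ioc 0 u) ≤ volume (Set.Ioi 1 ∩ S) := by
    intro u hu
    rw [hLvol u hu.1]
    have hsub : Set.Ioc 1 (L u) ⊆ Set.Ioi 1 ∩ S :=
      fun y hy => ⟨hy.1, hS _ hu.2 y (le_of_lt hy.1) hy.2⟩
    calc ENNReal.ofReal (L u - 1) = volume (Set.Ioc 1 (L u)) := by
          rw [Real.volume_Ioc]
      _ ≤ _ := measure_mono hsub
  -- U is a down-set within Ioi 0
  have hdown : ∀ u ∈ U, ∀ v : ℝ, 0 < v → v ≤ u → v ∈ U := by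
    intro u hu v hv hvu
    exact ⟨hv, hS _ hu.2 _ (hL1 v hv) (hLmono hvu)⟩
  set E : Set ℝ := {u | u ∈ U ∧ ∀ v ∈ U, v ≤ u} with hE
  have hcover : B ∩ U ⊆ (⋃ q ∈ {q : ℚ | (q : ℝ) ∈ U}, B ∩ Set.Ioc 0 (q : ℝ)) ∪ E := by
    intro u hu
    by_cases hmax : ∀ v ∈ U, v ≤ u
    · exact Or.inr ⟨hu.2, hmax⟩
    · push_neg at hmax
      obtain ⟨v, hv, huv⟩ := hmax
      obtain ⟨q, hq1, hq2⟩ := exists_rat_btwn huv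
      refine Or.inl (Set.mem_biUnion (show (q:ℝ) ∈ U from hdown v hv _ (lt_trans hu.2.1 hq1) hq2.le) ?_)
      exact ⟨hu.1, hu.2.1, hq1.le⟩
  have hEsub : E.Subsingleton := by
    intro a ha b hb
    exact le_antisymm (hb.2 a ha.1) (ha.2 b hb.1)
  calc volume (B ∩ U) ≤ volume ((⋃ q ∈ {q : ℚ | (q : ℝ) ∈ U}, B ∩ Set.Ioc 0 (q : ℝ)) ∪ E) :=
        measure_mono hcover
    _ ≤ volume (⋃ q ∈ {q : ℚ | (q : ℝ) ∈ U}, B ∩ Set.Ioc 0 (q : ℝ)) + volume E :=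
        measure_union_le _ _
    _ = volume (⋃ q ∈ {q : ℚ | (q : ℝ) ∈ U}, B ∩ Set.Ioc 0 (q : ℝ)) := by
        rw [hEsub.measure_zero, add_zero]
    _ ≤ volume (Set.Ioi 1 ∩ S) := by
        rw [measure_biUnion_eq_iSup (Set.to_countable _)]
        · exact iSup₂_le fun q hq => key _ hq
        · intro a ha b hb
          rcases le_total (a : ℚ) b with h | h
          · exact ⟨b, hb, fun x hx => ⟨hx.1, hx.2.1, hx.2.2.trans (by exact_mod_cast h)⟩, fun x hx => hx⟩
          · exact ⟨a, ha, fun x hx => hx, fun x hx => ⟨hx.1, hx.2.1, hx.2.2.trans (by exact_mod_cast h)⟩⟩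



lemma keyL (B : Set ℝ) (hB : MeasurableSet B) (L : ℝ → ℝ)
    (hL : ∀ t, L t = 1 + ∫ u in (0:ℝ)..t, B.indicator (fun _ => (1:ℝ)) u) :
    Monotone L ∧ (∀ u : ℝ, 0 ≤ u → 1 ≤ L u) ∧
      (∀ u : ℝ, 0 < u → volume (B ∩ Set.Ioc 0 u) = ENNReal.ofReal (L u - 1)) := by
  have hInt : ∀ a b : ℝ, IntervalIntegrable (B.indicator fun _ => (1:ℝ)) volume a b := by
    intro a b
    rw [intervalIntegrable_iff]
    exact (IntegrableOn.indicator (integrableOn_const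
      measure_Ioc_lt_top.ne (by simp)) hB)
  have hnn : ∀ u : ℝ, 0 ≤ B.indicator (fun _ => (1:ℝ)) u :=
    fun u => Set.indicator_nonneg (fun _ _ => zero_le_one) u
  have hmono : Monotone L := by
    intro a b hab
    rw [hL, hL]
    have hadd := intervalIntegral.integral_add_adjacent_intervals (μ := volume)
      (hInt 0 a) (hInt a b)
    have hnn2 : 0 ≤ ∫ u in a..b, B.indicator (fun _ => (1:ℝ)) u :=
      intervalIntegral.integral_nonneg hab (fun u _ => hnn u)
    linarith
  have hge : ∀ u : ℝ, 0 ≤ u → 1 ≤ L u := by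
    intro u hu
    rw [hL]
    have := intervalIntegral.integral_nonneg (μ := volume) hu (fun x _ => hnn x)
    linarith
  refine ⟨hmono, hge, ?_⟩
  intro u hu
  have hfin : volume (B ∩ Set.Ioc 0 u) ≠ ⊤ :=
    (lt_of_le_of_lt (measure_mono Set.inter_subset_right) measure_Ioc_lt_top).ne
  have : L u - 1 = (volume (B ∩ Set.Ioc 0 u)).toReal := by
    rw [hL]
    rw [intervalIntegral.integral_of_le hu.le]
    rw [MeasureTheory.setIntegral_indicator hB]
    rw [MeasureTheory.setIntegral_const]
    rw [Set.inter_comm]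
    simp [smul_eq_mul]
    rfl
  rw [this, ENNReal.ofReal_toReal hfin]
lemma keyB (B : Set ℝ) (hB : MeasurableSet B) (L : ℝ → ℝ)
    (hLmono : Monotone L) (hL1 : ∀ u : ℝ, 0 < u → 1 ≤ L u)
    (hLvol : ∀ u : ℝ, 0 < u → volume (B ∩ Set.Ioc 0 u) = ENNReal.ofReal (L u - 1))
    (wm : ℝ → ℝ) (hwm_mono : Monotone wm) (hwm1 : ∀ x, 1 ≤ wm x) :
    ∫⁻ u in B ∩ Set.Ioi 0, ENNReal.ofReal (1 / wm (L u)) ≤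
      ∫⁻ x in Set.Ioi 1, ENNReal.ofReal (1 / wm x) := by
  have hwmpos : ∀ x, 0 < wm x := fun x => lt_of_lt_of_le one_pos (hwm1 x)
  have hwm_meas : Measurable wm := hwm_mono.measurable
  have hL_meas : Measurable L := hLmono.measurable
  have h1 : ∫⁻ u in B ∩ Set.Ioi 0, ENNReal.ofReal (1 / wm (L u)) =
      ∫⁻ t in Set.Ioi 0, (volume.restrict (B ∩ Set.Ioi 0)) {u : ℝ | t < 1 / wm (L u)} := by
    apply lintegral_eq_lintegral_meas_lt
    · exact Filter.Eventually.of_forall (fun u => le_of_lt (by apply div_pos one_pos; exact hwmpos _))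
    · exact ((measurable_const.div (hwm_meas.comp hL_meas))).aemeasurable
  have h2 : ∫⁻ x in Set.Ioi 1, ENNReal.ofReal (1 / wm x) =
      ∫⁻ t in Set.Ioi 0, (volume.restrict (Set.Ioi 1)) {x : ℝ | t < 1 / wm x} := by
    apply lintegral_eq_lintegral_meas_lt
    · exact Filter.Eventually.of_forall (fun u => le_of_lt (by apply div_pos one_pos; exact hwmpos _))
    · exact (measurable_const.div hwm_meas).aemeasurable
  rw [h1, h2]
  apply lintegral_mono
  intro t
  set S : Set ℝ := {x | 1 ≤ x ∧ t < 1 / wm x} with hS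
  have hSdown : ∀ x ∈ S, ∀ y : ℝ, 1 ≤ y → y ≤ x → y ∈ S := by
    intro x hx y hy1 hyx
    refine ⟨hy1, lt_of_lt_of_le hx.2 ?_⟩
    exact one_div_le_one_div_of_le (hwmpos y) (hwm_mono hyx)
  calc (volume.restrict (B ∩ Set.Ioi 0)) {u : ℝ | t < 1 / wm (L u)}
      = volume ({u : ℝ | t < 1 / wm (L u)} ∩ (B ∩ Set.Ioi 0)) :=
        Measure.restrict_apply' (hB.inter measurableSet_Ioi)
    _ ≤ volume (B ∩ (Set.Ioi 0 ∩ L ⁻¹' S)) := by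
        apply measure_mono
        rintro u ⟨hu1, hu2, hu3⟩
        exact ⟨hu2, hu3, hL1 u hu3, hu1⟩
    _ ≤ volume (Set.Ioi 1 ∩ S) := keyA B L hLmono hL1 hLvol S hSdown
    _ ≤ volume ({x : ℝ | t < 1 / wm x} ∩ Set.Ioi 1) := by
        apply measure_mono
        rintro x ⟨hx1, hx2⟩
        exact ⟨hx2.2, hx1⟩
    _ = (volume.restrict (Set.Ioi 1)) {x : ℝ | t < 1 / wm x} :=
        (Measure.restrict_apply' measurableSet_Ioi).symm


/-- For an increasing `w : [1,∞) → [1,∞)` with `∫₁^∞ du/w(u) < ∞` and a two-state process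
`X : [0,∞) → {0,1}` with local times `L_i(t) = 1 + ∫₀^t 1{X_u = i} du`, one has
`∫₀^∞ (1{X_u=0}/(w(L₀(u)) w(L₁(u))²) + 1{X_u=1}/(w(L₁(u)) w(L₀(u))²)) du ≤ 2 ∫₁^∞ du/w(u)`. -/
theorem stmt11 (w : ℝ → ℝ) (hmono : MonotoneOn w (Set.Ici 1))
    (hge : ∀ u ∈ Set.Ici (1:ℝ), 1 ≤ w u)
    (hint : IntegrableOn (fun u => 1 / w u) (Set.Ici 1))
    (X : ℝ → ℕ) (hX : Measurable X) (hX01 : ∀ u, X u = 0 ∨ X u = 1)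
    (L0 L1 : ℝ → ℝ)
    (hL0 : ∀ t, L0 t = 1 + ∫ u in (0:ℝ)..t, (if X u = 0 then (1:ℝ) else 0))
    (hL1 : ∀ t, L1 t = 1 + ∫ u in (0:ℝ)..t, (if X u = 1 then (1:ℝ) else 0)) :
    (∫ u in Set.Ioi (0:ℝ),
        ((if X u = 0 then (1:ℝ) else 0) / (w (L0 u) * (w (L1 u)) ^ 2) +
          (if X u = 1 then (1:ℝ) else 0) / (w (L1 u) * (w (L0 u)) ^ 2)))
      ≤ 2 * ∫ u in Set.Ioi (1:ℝ), 1 / w u := by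
  classical
  set B0 : Set ℝ := X ⁻¹' {0} with hB0def
  set B1 : Set ℝ := X ⁻¹' {1} with hB1def
  have hB0 : MeasurableSet B0 := hX (measurableSet_singleton 0)
  have hB1 : MeasurableSet B1 := hX (measurableSet_singleton 1)
  have hmem0 : ∀ u, (u ∈ B0 ↔ X u = 0) := fun u => by simp [hB0def]
  have hmem1 : ∀ u, (u ∈ B1 ↔ X u = 1) := fun u => by simp [hB1def]
  have hL0' : ∀ t, L0 t = 1 + ∫ u in (0:ℝ)..t, B0.indicator (fun _ => (1:ℝ)) u := by
    intro t; rw [hL0]; congr 1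
    apply intervalIntegral.integral_congr
    intro u _
    simp [Set.indicator_apply, hmem0 u]
  have hL1' : ∀ t, L1 t = 1 + ∫ u in (0:ℝ)..t, B1.indicator (fun _ => (1:ℝ)) u := by
    intro t; rw [hL1]; congr 1
    apply intervalIntegral.integral_congr
    intro u _
    simp [Set.indicator_apply, hmem1 u]
  obtain ⟨hM0, hg0, hv0⟩ := keyL B0 hB0 L0 hL0'
  obtain ⟨hM1, hg1, hv1⟩ := keyL B1 hB1 L1 hL1'
  set wm : ℝ → ℝ := fun x => w (max x 1) with hwmdef
  have hwm_mono : Monotone wm := fun a b hab =>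
    hmono (le_max_right a 1) (le_max_right b 1) (max_le_max hab le_rfl)
  have hwm1 : ∀ x, 1 ≤ wm x := fun x => hge _ (le_max_right x 1)
  have hwmpos : ∀ x, 0 < wm x := fun x => lt_of_lt_of_le one_pos (hwm1 x)
  have hwm_eq : ∀ x : ℝ, 1 ≤ x → wm x = w x := by
    intro x hx; simp [hwmdef, max_eq_left hx]
  have hwm_meas : Measurable wm := hwm_mono.measurable
  have hL0meas : Measurable L0 := hM0.measurable
  have hL1meas : Measurable L1 := hM1.measurable
  set g : ℝ → ℝ := fun u =>
    (if X u = 0 then (1:ℝ) else 0) / (wm (L0 u) * (wm (L1 u)) ^ 2) +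
      (if X u = 1 then (1:ℝ) else 0) / (wm (L1 u) * (wm (L0 u)) ^ 2) with hgdef
  have step1 : (∫ u in Set.Ioi (0:ℝ),
        ((if X u = 0 then (1:ℝ) else 0) / (w (L0 u) * (w (L1 u)) ^ 2) +
          (if X u = 1 then (1:ℝ) else 0) / (w (L1 u) * (w (L0 u)) ^ 2)))
      = ∫ u in Set.Ioi (0:ℝ), g u := by
    apply MeasureTheory.setIntegral_congr_fun measurableSet_Ioi
    intro u hu
    have e0 : wm (L0 u) = w (L0 u) := hwm_eq _ (hg0 u (le_of_lt hu))
    have e1 : wm (L1 u) = w (L1 u) := hwm_eq _ (hg1 u (le_of_lt hu))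
    simp only [hgdef, e0, e1]
  have hs0 : MeasurableSet {u : ℝ | X u = 0} := by
    have : {u : ℝ | X u = 0} = B0 := by ext u; simp [hmem0 u]
    rw [this]; exact hB0
  have hs1 : MeasurableSet {u : ℝ | X u = 1} := by
    have : {u : ℝ | X u = 1} = B1 := by ext u; simp [hmem1 u]
    rw [this]; exact hB1
  have hg_meas : Measurable g := by
    apply Measurable.add
    · exact (Measurable.ite hs0 measurable_const measurable_const).div
        (((hwm_meas.comp hL0meas)).mul ((hwm_meas.comp hL1meas).pow_const 2))
    · exact (Measurable.ite hs1 measurable_const measurable_const).div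
        (((hwm_meas.comp hL1meas)).mul ((hwm_meas.comp hL0meas).pow_const 2))
  have hg_nonneg : ∀ u, 0 ≤ g u := by
    intro u
    apply add_nonneg <;>
    · apply div_nonneg
      · split <;> norm_num
      · exact mul_nonneg (le_of_lt (hwmpos _)) (pow_nonneg (le_of_lt (hwmpos _)) 2)
  set I : ℝ := ∫ u in Set.Ioi (1:ℝ), 1 / w u with hIdef
  have hI0 : 0 ≤ I := by
    apply MeasureTheory.setIntegral_nonneg measurableSet_Ioi
    intro x hx
    have := hge x (Set.mem_Ici.2 (le_of_lt hx))
    positivity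
  -- RHS lintegral identification
  have hIlin : ∫⁻ x in Set.Ioi (1:ℝ), ENNReal.ofReal (1 / wm x) = ENNReal.ofReal I := by
    have hcongr : ∫⁻ x in Set.Ioi (1:ℝ), ENNReal.ofReal (1 / wm x)
        = ∫⁻ x in Set.Ioi (1:ℝ), ENNReal.ofReal (1 / w x) := by
      apply MeasureTheory.setLIntegral_congr_fun measurableSet_Ioi
      intro x hx
      beta_reduce
      rw [hwm_eq x (le_of_lt hx)]
    rw [hcongr]
    symm
    apply MeasureTheory.ofReal_integral_eq_lintegral_ofReal
    · exact hint.mono_set Set.Ioi_subset_Ici_self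
    · rw [Filter.EventuallyLE, ae_restrict_iff' measurableSet_Ioi]
      apply Filter.Eventually.of_forall
      intro x hx
      have := hge x (Set.mem_Ici.2 (le_of_lt hx))
      positivity
  set F0 : ℝ → ENNReal := B0.indicator (fun u => ENNReal.ofReal (1 / wm (L0 u))) with hF0def
  set F1 : ℝ → ENNReal := B1.indicator (fun u => ENNReal.ofReal (1 / wm (L1 u))) with hF1def
  have hF0meas : Measurable F0 :=
    Measurable.indicator ((measurable_const.div (hwm_meas.comp hL0meas)).ennreal_ofReal) hB0
  have hF1meas : Measurable F1 :=
    Measurable.indicator ((measurable_const.div (hwm_meas.comp hL1meas)).ennreal_ofReal) hB1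
  have hptwise : ∀ u, ENNReal.ofReal (g u) ≤ F0 u + F1 u := by
    intro u
    have hb0 : (1:ℝ) ≤ (wm (L0 u)) ^ 2 := by nlinarith [hwm1 (L0 u)]
    have hb1 : (1:ℝ) ≤ (wm (L1 u)) ^ 2 := by nlinarith [hwm1 (L1 u)]
    rcases hX01 u with h | h
    · have hne : X u ≠ 1 := by omega
      have hgu : g u = 1 / (wm (L0 u) * (wm (L1 u)) ^ 2) := by
        simp [hgdef, h, hne]
      have hF0u : F0 u = ENNReal.ofReal (1 / wm (L0 u)) :=
        Set.indicator_of_mem ((hmem0 u).2 h) _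
      have hF1u : F1 u = 0 :=
        Set.indicator_of_notMem (fun hc => hne ((hmem1 u).1 hc)) _
      rw [hgu, hF0u, hF1u, add_zero]
      apply ENNReal.ofReal_le_ofReal
      apply one_div_le_one_div_of_le (hwmpos _)
      exact le_mul_of_one_le_right (le_of_lt (hwmpos _)) hb1
    · have hne : X u ≠ 0 := by omega
      have hgu : g u = 1 / (wm (L1 u) * (wm (L0 u)) ^ 2) := by
        simp [hgdef, h, hne]
      have hF1u : F1 u = ENNReal.ofReal (1 / wm (L1 u)) :=
        Set.indicator_of_mem ((hmem1 u).2 h) _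
      have hF0u : F0 u = 0 :=
        Set.indicator_of_notMem (fun hc => hne ((hmem0 u).1 hc)) _
      rw [hgu, hF0u, hF1u, zero_add]
      apply ENNReal.ofReal_le_ofReal
      apply one_div_le_one_div_of_le (hwmpos _)
      exact le_mul_of_one_le_right (le_of_lt (hwmpos _)) hb0
  have hterm0 : ∫⁻ u in Set.Ioi (0:ℝ), F0 u ≤ ENNReal.ofReal I := by
    rw [hF0def, MeasureTheory.lintegral_indicator hB0 _, Measure.restrict_restrict hB0]
    rw [← hIlin]
    exact keyB B0 hB0 L0 hM0 (fun u hu => hg0 u (le_of_lt hu)) hv0 wm hwm_mono hwm1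
  have hterm1 : ∫⁻ u in Set.Ioi (0:ℝ), F1 u ≤ ENNReal.ofReal I := by
    rw [hF1def, MeasureTheory.lintegral_indicator hB1 _, Measure.restrict_restrict hB1]
    rw [← hIlin]
    exact keyB B1 hB1 L1 hM1 (fun u hu => hg1 u (le_of_lt hu)) hv1 wm hwm_mono hwm1
  have hlint : ∫⁻ u in Set.Ioi (0:ℝ), ENNReal.ofReal (g u) ≤ ENNReal.ofReal (I + I) := by
    calc ∫⁻ u in Set.Ioi (0:ℝ), ENNReal.ofReal (g u)
        ≤ ∫⁻ u in Set.Ioi (0:ℝ), (F0 u + F1 u) := lintegral_mono (fun u => hptwise u)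
      _ = (∫⁻ u in Set.Ioi (0:ℝ), F0 u) + ∫⁻ u in Set.Ioi (0:ℝ), F1 u :=
          lintegral_add_left (hF0meas) _
      _ ≤ ENNReal.ofReal I + ENNReal.ofReal I := add_le_add hterm0 hterm1
      _ = ENNReal.ofReal (I + I) := (ENNReal.ofReal_add hI0 hI0).symm
  have step2 : ∫ u in Set.Ioi (0:ℝ), g u
      = (∫⁻ u in Set.Ioi (0:ℝ), ENNReal.ofReal (g u)).toReal := by
    apply MeasureTheory.integral_eq_lintegral_of_nonneg_ae
    · exact Filter.Eventually.of_forall hg_nonneg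
    · exact hg_meas.aestronglyMeasurable
  rw [step1, step2]
  have := ENNReal.toReal_le_of_le_ofReal (by linarith : (0:ℝ) ≤ I + I) hlint
  linarith
end

section
/- Let w : [1,∞) → [1,∞) be increasing and let two interleaved sequences be defined by ℓ*₀(n+1) = ℓ*₀(n) + χₙ/w(ℓ*₁(n)) and ℓ̃₀(n+1) = ℓ̃₀(n) + χₙ/w(ℓ̃₁(n)) (similarly for index 1 with another shared sequence of positive numbers), with ℓ*₀(0) = ℓ̃₀(0), ℓ*₁(0) ≥ ℓ̃₁(0). Then by induction, for all n: ℓ̃₀(n) ≥ ℓ*₀(n) and ℓ̃₁(n) ≤ ℓ*₁(n), with strict inequalities for n ≥ 1 if ℓ*₁(0) > ℓ̃₁(0). -/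
/-- Monotone coupling of two interleaved local-time recursions driven by the same positive
sequences `χ, ψ`: if `ℓ*₀(0) = ℓ̃₀(0)` and `ℓ*₁(0) ≥ ℓ̃₁(0)` then for all `n`,
`ℓ̃₀(n) ≥ ℓ*₀(n)` and `ℓ̃₁(n) ≤ ℓ*₁(n)`, with strict inequalities for `n ≥ 1` whenever
`ℓ*₁(0) > ℓ̃₁(0)`. -/
theorem stmt17 (w : ℝ → ℝ) (hmono : StrictMonoOn w (Set.Ici 1))
    (hge : ∀ u ∈ Set.Ici (1:ℝ), 1 ≤ w u)
    (χ ψ : ℕ → ℝ) (hχ : ∀ n, 0 < χ n) (hψ : ∀ n, 0 < ψ n)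
    (s0 s1 t0 t1 : ℕ → ℝ)
    (hs0i : 1 ≤ s0 0) (hs1i : 1 ≤ s1 0) (ht0i : 1 ≤ t0 0) (ht1i : 1 ≤ t1 0)
    (hrec_s0 : ∀ n, s0 (n + 1) = s0 n + χ n / w (s1 n))
    (hrec_s1 : ∀ n, s1 (n + 1) = s1 n + ψ n / w (s0 (n + 1)))
    (hrec_t0 : ∀ n, t0 (n + 1) = t0 n + χ n / w (t1 n))
    (hrec_t1 : ∀ n, t1 (n + 1) = t1 n + ψ n / w (t0 (n + 1)))
    (hinit0 : s0 0 = t0 0) (hinit1 : t1 0 ≤ s1 0) :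
    (∀ n, s0 n ≤ t0 n ∧ t1 n ≤ s1 n) ∧
      (t1 0 < s1 0 → ∀ n ≥ 1, s0 n < t0 n ∧ t1 n < s1 n) := by
  -- all sequences stay ≥ 1
  have hs : ∀ n, 1 ≤ s0 n ∧ 1 ≤ s1 n := by
    intro n
    induction n with
    | zero => exact ⟨hs0i, hs1i⟩
    | succ n ih =>
      obtain ⟨h0, h1⟩ := ih
      have hw1 : (0:ℝ) < w (s1 n) := lt_of_lt_of_le one_pos (hge _ h1)
      have h0' : 1 ≤ s0 (n + 1) := by
        rw [hrec_s0 n]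
        have : 0 ≤ χ n / w (s1 n) := le_of_lt (div_pos (hχ n) hw1)
        linarith
      have hw0 : (0:ℝ) < w (s0 (n + 1)) := lt_of_lt_of_le one_pos (hge _ h0')
      refine ⟨h0', ?_⟩
      rw [hrec_s1 n]
      have : 0 ≤ ψ n / w (s0 (n + 1)) := le_of_lt (div_pos (hψ n) hw0)
      linarith
  have ht : ∀ n, 1 ≤ t0 n ∧ 1 ≤ t1 n := by
    intro n
    induction n with
    | zero => exact ⟨ht0i, ht1i⟩
    | succ n ih =>
      obtain ⟨h0, h1⟩ := ih
      have hw1 : (0:ℝ) < w (t1 n) := lt_of_lt_of_le one_pos (hge _ h1)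
      have h0' : 1 ≤ t0 (n + 1) := by
        rw [hrec_t0 n]
        have : 0 ≤ χ n / w (t1 n) := le_of_lt (div_pos (hχ n) hw1)
        linarith
      have hw0 : (0:ℝ) < w (t0 (n + 1)) := lt_of_lt_of_le one_pos (hge _ h0')
      refine ⟨h0', ?_⟩
      rw [hrec_t1 n]
      have : 0 ≤ ψ n / w (t0 (n + 1)) := le_of_lt (div_pos (hψ n) hw0)
      linarith
  have hmonoOn : MonotoneOn w (Set.Ici 1) := hmono.monotoneOn
  have main : ∀ n, s0 n ≤ t0 n ∧ t1 n ≤ s1 n := by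
    intro n
    induction n with
    | zero => exact ⟨le_of_eq hinit0, hinit1⟩
    | succ n ih =>
      obtain ⟨h0, h1⟩ := ih
      have hwle : w (t1 n) ≤ w (s1 n) := hmonoOn (ht n).2 (le_trans (ht n).2 h1) h1
      have hwt1pos : (0:ℝ) < w (t1 n) := lt_of_lt_of_le one_pos (hge _ (ht n).2)
      have h0' : s0 (n + 1) ≤ t0 (n + 1) := by
        rw [hrec_s0 n, hrec_t0 n]
        have : χ n / w (s1 n) ≤ χ n / w (t1 n) := by
          gcongr
          exact le_of_lt (hχ n)
        linarith
      have hwle2 : w (s0 (n + 1)) ≤ w (t0 (n + 1)) :=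
        hmonoOn (hs (n + 1)).1 (le_trans (hs (n + 1)).1 h0') h0'
      have hws0pos : (0:ℝ) < w (s0 (n + 1)) := lt_of_lt_of_le one_pos (hge _ (hs (n + 1)).1)
      refine ⟨h0', ?_⟩
      rw [hrec_s1 n, hrec_t1 n]
      have : ψ n / w (t0 (n + 1)) ≤ ψ n / w (s0 (n + 1)) := by
        gcongr
        exact le_of_lt (hψ n)
      linarith
  refine ⟨main, ?_⟩
  intro hstrict
  -- strict version: prove by induction that strict holds at n+1
  have step : ∀ n, t1 n < s1 n → s0 n ≤ t0 n → s0 (n + 1) < t0 (n + 1) ∧ t1 (n + 1) < s1 (n + 1) := by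
    intro n h1 h0
    have hwlt : w (t1 n) < w (s1 n) := hmono (ht n).2 (le_trans (ht n).2 h1.le) h1
    have hwt1pos : (0:ℝ) < w (t1 n) := lt_of_lt_of_le one_pos (hge _ (ht n).2)
    have h0' : s0 (n + 1) < t0 (n + 1) := by
      rw [hrec_s0 n, hrec_t0 n]
      have : χ n / w (s1 n) < χ n / w (t1 n) := by gcongr; exact hχ n
      linarith
    have hwlt2 : w (s0 (n + 1)) < w (t0 (n + 1)) :=
      hmono (hs (n + 1)).1 (le_trans (hs (n + 1)).1 h0'.le) h0'
    have hws0pos : (0:ℝ) < w (s0 (n + 1)) := lt_of_lt_of_le one_pos (hge _ (hs (n + 1)).1)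
    refine ⟨h0', ?_⟩
    rw [hrec_s1 n, hrec_t1 n]
    have : ψ n / w (t0 (n + 1)) < ψ n / w (s0 (n + 1)) := by gcongr; exact hψ n
    linarith
  have key : ∀ n, s0 (n + 1) < t0 (n + 1) ∧ t1 (n + 1) < s1 (n + 1) := by
    intro n
    induction n with
    | zero => exact step 0 hstrict (le_of_eq hinit0)
    | succ n ih => exact step (n + 1) ih.2 ih.1.le
  intro n hn
  obtain ⟨m, rfl⟩ := Nat.exists_eq_add_of_le hn
  simpa [Nat.add_comm] using key m
end
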